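/- Let V be an (N+1)-dimensional space of complex polynomials without base points (for every z ∈ ℂ there is v ∈ V with v(z) ≠ 0). Let U_i(x) be the monic greatest common divisor of the family of discrete Wronskians {W(u_1,...,u_i) : u_1,...,u_i ∈ V}. Then there is a unique sequence of monic polynomials T_1(x),...,T_N(x) such that U_i(x) = ∏_{s=1}^{i-1} ∏_{j=1}^{i-s} T_s(x+(j-1)h) for all i = 1,...,N+1. -/

import Mathlib

/-- Discrete Wronskian of a tuple of polynomials, as a polynomial. -/
noncomputable def DWpoly (h : ℂ) {s : ℕ} (g : Fin s → Polynomial ℂ) : Polynomial ℂ :=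
  Matrix.det (Matrix.of fun i j : Fin s =>
    (g i).comp (Polynomial.X + Polynomial.C ((j : ℕ) * h)))


open Matrix Polynomial

def eS (n : ℕ) : (Fin n) ⊕ (Fin 1) ≃ Fin (n + 1) where
  toFun := Sum.elim Fin.succ (fun _ => 0)
  invFun := fun x => Fin.cases (Sum.inr 0) Sum.inl x
  left_inv := by
    rintro (k | j)
    · simp
    · simp [Subsingleton.elim j 0]
  right_inv := by
    intro x
    induction x using Fin.cases <;> simp

def eC (n : ℕ) : (Fin n) ⊕ (Fin 1) ≃ Fin (n + 1) where
  toFun := Sum.elim Fin.castSucc (fun _ => Fin.last n)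
  invFun := fun x => Fin.lastCases (Sum.inr 0) Sum.inl x
  left_inv := by
    rintro (k | j)
    · simp
    · simp [Subsingleton.elim j 0]
  right_inv := by
    intro x
    induction x using Fin.lastCases <;> simp

def eBig (n : ℕ) : (Fin n) ⊕ (Fin 2) ≃ Fin (n + 2) where
  toFun := Sum.elim (fun k => k.succ.castSucc)
    (fun j => if j = 0 then 0 else Fin.last (n+1))
  invFun := fun x =>
    if hx : (x : ℕ) = 0 then Sum.inr 0
    else if hx' : (x : ℕ) = n + 1 then Sum.inr 1
    else Sum.inl ⟨(x : ℕ) - 1, by omega⟩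
  left_inv := by
    rintro (k | j)
    · have hk : ((k.succ.castSucc : Fin (n+2)) : ℕ) = (k : ℕ) + 1 := by simp
      have hkn : (k : ℕ) < n := k.isLt
      simp only [Sum.elim_inl]
      split_ifs with h1 h2
      · omega
      simp [Fin.ext_iff]
      omega
    · fin_cases j
      · simp
      · simp only [Sum.elim_inr, if_neg (by decide : ¬(1 : Fin 2) = 0)]
        simp [Fin.ext_iff]
  right_inv := by
    intro x
    beta_reduce
    by_cases h0 : (x : ℕ) = 0
    · rw [dif_pos h0]
      simp only [Sum.elim_inr, if_pos rfl]
      exact Fin.ext (by simp [h0])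
    · rw [dif_neg h0]
      by_cases hl : (x : ℕ) = n + 1
      · rw [dif_pos hl]
        simp only [Sum.elim_inr, if_neg (by decide : ¬(1 : Fin 2) = 0)]
        exact Fin.ext (by simp [hl])
      · rw [dif_neg hl]
        simp only [Sum.elim_inl]
        ext
        have := x.isLt
        simp
        omega

theorem dodgson_blocks {K : Type} [Field K] {n : ℕ}
    (E : Matrix (Fin n) (Fin n) K) (B : Matrix (Fin n) (Fin 2) K)
    (C : Matrix (Fin 2) (Fin n) K) (D : Matrix (Fin 2) (Fin 2) K)
    (hE : E.det ≠ 0) :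
    (Matrix.fromBlocks E B C D).det * E.det =
      (Matrix.fromBlocks E (B.submatrix id fun _ : Fin 1 => 1)
          (C.submatrix (fun _ : Fin 1 => 1) id) (Matrix.of fun _ _ : Fin 1 => D 1 1)).det *
        (Matrix.fromBlocks E (B.submatrix id fun _ : Fin 1 => 0)
          (C.submatrix (fun _ : Fin 1 => 0) id) (Matrix.of fun _ _ : Fin 1 => D 0 0)).det -
      (Matrix.fromBlocks E (B.submatrix id fun _ : Fin 1 => 0)
          (C.submatrix (fun _ : Fin 1 => 1) id) (Matrix.of fun _ _ : Fin 1 => D 1 0)).det *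
        (Matrix.fromBlocks E (B.submatrix id fun _ : Fin 1 => 1)
          (C.submatrix (fun _ : Fin 1 => 0) id) (Matrix.of fun _ _ : Fin 1 => D 0 1)).det := by
  have : Invertible E := E.invertibleOfIsUnitDet (isUnit_iff_ne_zero.mpr hE)
  have key : ∀ i j : Fin 2,
      ((C.submatrix (fun _ : Fin 1 => i) id) * ⅟E * (B.submatrix id fun _ : Fin 1 => j)) 0 0
        = (C * ⅟E * B) i j := by
    intro i j
    simp [Matrix.mul_apply]
  rw [Matrix.det_fromBlocks₁₁, Matrix.det_fromBlocks₁₁, Matrix.det_fromBlocks₁₁,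
    Matrix.det_fromBlocks₁₁, Matrix.det_fromBlocks₁₁]
  rw [Matrix.det_fin_two]
  have d1 : ∀ (A : Matrix (Fin 1) (Fin 1) K), A.det = A 0 0 := fun A => Matrix.det_fin_one A
  rw [d1, d1, d1, d1]
  simp only [Matrix.sub_apply, Matrix.of_apply, key]
  ring

theorem det_submatrix_pair {K : Type} [Field K] {n : ℕ}
    (A : Matrix (Fin (n+1)) (Fin (n+1)) K) (e f : (Fin n) ⊕ (Fin 1) ≃ Fin (n+1)) :
    (A.submatrix e f).det = (Equiv.Perm.sign (f.trans e.symm) : ℤ) * A.det := by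
  have h : A.submatrix e f = (A.submatrix e e).submatrix id (f.trans e.symm) := by
    ext i j
    simp [Matrix.submatrix_apply]
  rw [h, Matrix.det_permute' (f.trans e.symm), Matrix.det_submatrix_equiv_self]

theorem dodgson {K : Type} [Field K] {n : ℕ} (M : Matrix (Fin (n+2)) (Fin (n+2)) K)
    (hE : (M.submatrix (fun k : Fin n => k.succ.castSucc)
      (fun k : Fin n => k.succ.castSucc)).det ≠ 0) :
    M.det * (M.submatrix (fun k : Fin n => k.succ.castSucc)
        (fun k : Fin n => k.succ.castSucc)).det =
      (M.submatrix ((0 : Fin (n+2)).succAbove) ((0 : Fin (n+2)).succAbove)).det *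
        (M.submatrix ((Fin.last (n+1)).succAbove) ((Fin.last (n+1)).succAbove)).det -
      (M.submatrix ((0 : Fin (n+2)).succAbove) ((Fin.last (n+1)).succAbove)).det *
        (M.submatrix ((Fin.last (n+1)).succAbove) ((0 : Fin (n+2)).succAbove)).det := by
  set emb : Fin n → Fin (n+2) := fun k => k.succ.castSucc with hemb
  set cor : Fin 2 → Fin (n+2) := fun j => if j = 0 then 0 else Fin.last (n+1) with hcor
  set E := M.submatrix emb emb with hEdef
  set B : Matrix (Fin n) (Fin 2) K := fun k j => M (emb k) (cor j) with hB
  set C : Matrix (Fin 2) (Fin n) K := fun j k => M (cor j) (emb k) with hC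
  set D : Matrix (Fin 2) (Fin 2) K := fun i j => M (cor i) (cor j) with hD
  have hMdet : M.det = (Matrix.fromBlocks E B C D).det := by
    rw [← Matrix.det_submatrix_equiv_self (eBig n) M]
    congr 1
    ext (i | i) (j | j) <;> rfl
  -- the four corner minors
  have h00 : (M.submatrix ((0 : Fin (n+2)).succAbove) ((0 : Fin (n+2)).succAbove)).det =
      (Matrix.fromBlocks E (B.submatrix id fun _ : Fin 1 => 1)
        (C.submatrix (fun _ : Fin 1 => 1) id) (Matrix.of fun _ _ : Fin 1 => D 1 1)).det := by
    rw [← Matrix.det_submatrix_equiv_self (eC n)]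
    congr 1
    ext (i | i) (j | j) <;>
      simp [eC, hB, hC, hD, hEdef, hemb, hcor, Fin.zero_succAbove, Fin.succ_castSucc, -Fin.castSucc_succ,
        Fin.succ_last, Matrix.submatrix_apply, Matrix.submatrix]
  have hLL : (M.submatrix ((Fin.last (n+1)).succAbove) ((Fin.last (n+1)).succAbove)).det =
      (Matrix.fromBlocks E (B.submatrix id fun _ : Fin 1 => 0)
        (C.submatrix (fun _ : Fin 1 => 0) id) (Matrix.of fun _ _ : Fin 1 => D 0 0)).det := by
    rw [← Matrix.det_submatrix_equiv_self (eS n)]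
    congr 1
    ext (i | i) (j | j) <;>
      simp [eS, hB, hC, hD, hEdef, hemb, hcor, Fin.succAbove_last, Fin.succ_castSucc, -Fin.castSucc_succ,
        Matrix.submatrix_apply, Matrix.submatrix]
  have h0L : (Equiv.Perm.sign ((eS n).trans (eC n).symm) : ℤ) *
      (M.submatrix ((0 : Fin (n+2)).succAbove) ((Fin.last (n+1)).succAbove)).det =
      (Matrix.fromBlocks E (B.submatrix id fun _ : Fin 1 => 0)
        (C.submatrix (fun _ : Fin 1 => 1) id) (Matrix.of fun _ _ : Fin 1 => D 1 0)).det := by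
    rw [← det_submatrix_pair _ (eC n) (eS n)]
    congr 1
    ext (i | i) (j | j) <;>
      simp [eC, eS, hB, hC, hD, hEdef, hemb, hcor, Fin.zero_succAbove, Fin.succAbove_last,
        Fin.succ_castSucc, -Fin.castSucc_succ, Fin.succ_last, Matrix.submatrix_apply, Matrix.submatrix]
  have hL0 : (Equiv.Perm.sign ((eC n).trans (eS n).symm) : ℤ) *
      (M.submatrix ((Fin.last (n+1)).succAbove) ((0 : Fin (n+2)).succAbove)).det =
      (Matrix.fromBlocks E (B.submatrix id fun _ : Fin 1 => 1)
        (C.submatrix (fun _ : Fin 1 => 0) id) (Matrix.of fun _ _ : Fin 1 => D 0 1)).det := by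
    rw [← det_submatrix_pair _ (eS n) (eC n)]
    congr 1
    ext (i | i) (j | j) <;>
      simp [eC, eS, hB, hC, hD, hEdef, hemb, hcor, Fin.zero_succAbove, Fin.succAbove_last,
        Fin.succ_castSucc, -Fin.castSucc_succ, Fin.succ_last, Matrix.submatrix_apply, Matrix.submatrix]
  have hsign : ((Equiv.Perm.sign ((eS n).trans (eC n).symm) : ℤ) : K) *
      ((Equiv.Perm.sign ((eC n).trans (eS n).symm) : ℤ) : K) = 1 := by
    have h1 : ((eC n).trans (eS n).symm) = ((eS n).trans (eC n).symm)⁻¹ := by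
      rfl
    rw [h1, Equiv.Perm.sign_inv]
    push_cast
    rw [← Int.cast_mul]
    norm_num [Int.units_mul_self]
  calc M.det * E.det = (Matrix.fromBlocks E B C D).det * E.det := by rw [hMdet]
    _ = _ := by
      rw [dodgson_blocks E B C D hE, ← h00, ← hLL, ← h0L, ← hL0]
      linear_combination (-((M.submatrix ((0 : Fin (n+2)).succAbove)
          ((Fin.last (n+1)).succAbove)).det *
        (M.submatrix ((Fin.last (n+1)).succAbove) ((0 : Fin (n+2)).succAbove)).det)) * hsign

open Polynomial



lemma comp_shift_cancel (P : Polynomial ℂ) (a : ℂ) :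
    (P.comp (X + C a)).comp (X - C a) = P := by
  rw [Polynomial.comp_assoc]
  simp

lemma pow_dvd_comp {z a : ℂ} {k : ℕ} {P : Polynomial ℂ}
    (hd : (X - C (z + a)) ^ k ∣ P) : (X - C z) ^ k ∣ P.comp (X + C a) := by
  obtain ⟨Q, rfl⟩ := hd
  refine ⟨Q.comp (X + C a), ?_⟩
  rw [mul_comp, pow_comp, sub_comp, X_comp, C_comp, C_add]
  ring

lemma pow_dvd_comp_iff {z a : ℂ} {k : ℕ} {P : Polynomial ℂ} :
    (X - C z) ^ k ∣ P.comp (X + C a) ↔ (X - C (z + a)) ^ k ∣ P := by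
  constructor
  · intro hd
    have h2 : (X - C (z + a + -a)) ^ k ∣ P.comp (X + C a) := by
      rw [show z + a + -a = z by ring]; exact hd
    have := pow_dvd_comp (a := -a) h2
    rwa [show (X + C (-a) : Polynomial ℂ) = X - C a by rw [map_neg]; ring,
      comp_shift_cancel] at this
  · exact pow_dvd_comp

/-- coefficient functional detecting exact vanishing order -/
noncomputable def phiC (z : ℂ) (a : ℕ) (P : Polynomial ℂ) : ℂ := (P.comp (X + C z)).coeff a

lemma X_pow_dvd_comp_iff {z : ℂ} {k : ℕ} {P : Polynomial ℂ} :
    X ^ k ∣ P.comp (X + C z) ↔ (X - C z) ^ k ∣ P := by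
  have := pow_dvd_comp_iff (z := 0) (a := z) (k := k) (P := P)
  simpa using this

lemma phiC_char {z : ℂ} {a : ℕ} {P : Polynomial ℂ} (hlow : (X - C z) ^ a ∣ P) :
    (X - C z) ^ (a + 1) ∣ P ↔ phiC z a P = 0 := by
  rw [← X_pow_dvd_comp_iff] at hlow ⊢
  rw [X_pow_dvd_iff] at hlow ⊢
  constructor
  · intro h2
    exact h2 a (by omega)
  · intro h2 d hd
    rcases Nat.lt_or_ge d a with hda | hda
    · exact hlow d hda
    · have : d = a := by omega
      rw [this]; exact h2

lemma rm_eq_of {z : ℂ} {a : ℕ} {P : Polynomial ℂ} (hP : (X - C z) ^ a ∣ P)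
    (hP' : ¬ (X - C z) ^ (a + 1) ∣ P) : P ≠ 0 ∧ P.rootMultiplicity z = a := by
  have hne : P ≠ 0 := by rintro rfl; exact hP' (dvd_zero _)
  refine ⟨hne, le_antisymm ?_ ?_⟩
  · by_contra hlt
    push_neg at hlt
    exact hP' (dvd_trans (pow_dvd_pow _ (by omega)) (Polynomial.pow_rootMultiplicity_dvd P z))
  · exact (Polynomial.le_rootMultiplicity_iff hne).mpr hP

lemma rm_comp_shift (P : Polynomial ℂ) (z a : ℂ) (hP : P ≠ 0) :
    (P.comp (X + C a)).rootMultiplicity z = P.rootMultiplicity (z + a) := by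
  have hne : P.comp (X + C a) ≠ 0 := by
    intro hc
    have := congrArg (fun Q => Q.comp (X - C a)) hc
    simp only [comp_shift_cancel, zero_comp] at this
    exact hP this
  have h1 : (X - C z) ^ (P.rootMultiplicity (z + a)) ∣ P.comp (X + C a) :=
    pow_dvd_comp_iff.mpr (Polynomial.pow_rootMultiplicity_dvd P (z + a))
  have h2 : ¬ (X - C z) ^ (P.rootMultiplicity (z + a) + 1) ∣ P.comp (X + C a) := by
    rw [pow_dvd_comp_iff]
    intro hc
    have := (Polynomial.le_rootMultiplicity_iff hP).mpr hc
    omega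
  exact (rm_eq_of h1 h2).2

lemma aeval_comp_eq (q p : Polynomial ℂ) :
    (Polynomial.aeval q) p = p.comp q := by
  rw [Polynomial.aeval_def, Polynomial.comp, Polynomial.algebraMap_eq]

lemma DW_comp_shift {m : ℕ} (h e : ℂ) (g : Fin m → Polynomial ℂ) :
    Matrix.det (Matrix.of fun (k j : Fin m) => (g k).comp (X + C ((j : ℕ) * h + e)))
      = (DWpoly h g).comp (X + C e) := by
  have := (Polynomial.aeval (R := ℂ) (X + C e)).toRingHom.map_det
    (Matrix.of fun (k j : Fin m) => (g k).comp (X + C ((j : ℕ) * h)))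
  rw [show ((Polynomial.aeval (R := ℂ) (X + C e)).toRingHom) ((Matrix.of fun (k j : Fin m) =>
    (g k).comp (X + C ((j : ℕ) * h))).det) = (DWpoly h g).comp (X + C e) from by
      rw [AlgHom.toRingHom_eq_coe]; exact aeval_comp_eq _ _] at this
  rw [this]
  refine congrArg Matrix.det (Matrix.ext fun k j => ?_)
  simp only [AlgHom.toRingHom_eq_coe, RingHom.mapMatrix_apply, Matrix.map_apply,
    Matrix.of_apply, RingHom.coe_coe]
  rw [aeval_comp_eq, Polynomial.comp_assoc]
  congr 1
  rw [add_comp, X_comp, C_comp, C_add]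
  ring

lemma DW_smul (h : ℂ) {s : ℕ} (g : Fin s → Polynomial ℂ) (τ : ℂ) :
    DWpoly h (fun k => Polynomial.C τ * g k) = Polynomial.C τ ^ s * DWpoly h g := by
  unfold DWpoly
  rw [show (Matrix.of fun i j : Fin s => ((Polynomial.C τ * g i)).comp (X + C ((j : ℕ) * h)))
      = Polynomial.C τ • (Matrix.of fun i j : Fin s => (g i).comp (X + C ((j : ℕ) * h))) from by
    ext i j
    simp [mul_comp]]
  rw [Matrix.det_smul]
  simp

noncomputable def DWt (h : ℂ) {s : ℕ} (g : Fin s → Polynomial (Polynomial ℂ)) :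
    Polynomial (Polynomial ℂ) :=
  Matrix.det (Matrix.of fun i j : Fin s =>
    (g i).comp (X + Polynomial.C (Polynomial.C ((j : ℕ) * h))))

lemma DWt_eval (h : ℂ) {s : ℕ} (g : Fin s → Polynomial (Polynomial ℂ)) (τ : ℂ) :
    (DWt h g).map (evalRingHom τ) = DWpoly h (fun k => (g k).map (evalRingHom τ)) := by
  unfold DWt DWpoly
  rw [show ((Matrix.of fun i j : Fin s => (g i).comp (X + Polynomial.C
      (Polynomial.C ((j : ℕ) * h)))).det).map (evalRingHom τ)
    = (Polynomial.mapRingHom (evalRingHom τ))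
      ((Matrix.of fun i j : Fin s => (g i).comp (X + Polynomial.C
        (Polynomial.C ((j : ℕ) * h)))).det) from rfl]
  rw [RingHom.map_det]
  refine congrArg Matrix.det (Matrix.ext fun k j => ?_)
  simp only [RingHom.mapMatrix_apply, Matrix.map_apply, Matrix.of_apply,
    Polynomial.coe_mapRingHom]
  rw [Polynomial.map_comp]
  simp

lemma pencil_exists (h z : ℂ) (a : ℕ) {s : ℕ} (u w : Fin s → Polynomial ℂ) :
    ∃ F : Polynomial ℂ, ∀ τ : ℂ,
      F.eval τ = phiC z a (DWpoly h (fun k => u k + Polynomial.C τ * w k)) := by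
  refine ⟨((DWt h (fun k => (u k).map Polynomial.C +
    Polynomial.C Polynomial.X * ((w k).map Polynomial.C))).comp
      (X + Polynomial.C (Polynomial.C z))).coeff a, ?_⟩
  intro τ
  set Q := DWt h (fun k => (u k).map Polynomial.C +
    Polynomial.C Polynomial.X * ((w k).map Polynomial.C)) with hQ
  have h1 : ((Q.comp (X + Polynomial.C (Polynomial.C z))).coeff a).eval τ
      = (((Q.comp (X + Polynomial.C (Polynomial.C z))).map (evalRingHom τ))).coeff a := by
    rw [Polynomial.coeff_map]
    rfl
  rw [h1, Polynomial.map_comp]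
  have h2 : (X + Polynomial.C (Polynomial.C z) : Polynomial (Polynomial ℂ)).map
      (evalRingHom τ) = X + C z := by simp
  rw [h2, hQ, DWt_eval]
  have h3 : (fun k => ((u k).map Polynomial.C + Polynomial.C Polynomial.X *
      ((w k).map Polynomial.C)).map (evalRingHom τ)) = fun k => u k + Polynomial.C τ * w k := by
    funext k
    rw [Polynomial.map_add, Polynomial.map_mul, Polynomial.map_map, Polynomial.map_map,
      Polynomial.map_C]
    simp [show (evalRingHom τ).comp Polynomial.C = RingHom.id ℂ from by ext c; simp]
  rw [h3]
  rfl

lemma DW_one (h : ℂ) (u : Fin 1 → Polynomial ℂ) : DWpoly h u = u 0 := by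
  unfold DWpoly
  rw [Matrix.det_fin_one]
  simp

lemma U1_eq_one (h : ℂ) (V : Submodule ℂ (Polynomial ℂ))
    (hbp : ∀ z : ℂ, ∃ v ∈ V, Polynomial.eval z v ≠ 0) (U1 : Polynomial ℂ)
    (hmonic : U1.Monic)
    (hdvd : ∀ u : Fin 1 → Polynomial ℂ, (∀ k, u k ∈ V) → U1 ∣ DWpoly h u) :
    U1 = 1 := by
  by_contra hne
  have hdeg : 0 < U1.degree := by
    rcases lt_or_ge 0 U1.degree with h1 | h1
    · exact h1
    · exact absurd (hmonic.degree_le_zero_iff_eq_one.mp h1) hne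
  obtain ⟨z, hz⟩ := Complex.exists_root hdeg
  obtain ⟨v, hvV, hv⟩ := hbp z
  have : U1 ∣ v := by
    have := hdvd (fun _ => v) (fun _ => hvV)
    rwa [DW_one] at this
  obtain ⟨q, rfl⟩ := this
  exact hv (by rw [Polynomial.eval_mul, hz.eq_zero, zero_mul])

lemma exact_tuple (h : ℂ) (V : Submodule ℂ (Polynomial ℂ)) (i : ℕ) (Ui : Polynomial ℂ)
    (hmonic : Ui.Monic)
    (hdvd : ∀ u : Fin i → Polynomial ℂ, (∀ k, u k ∈ V) → Ui ∣ DWpoly h u)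
    (hgcd : ∀ D : Polynomial ℂ,
      (∀ u : Fin i → Polynomial ℂ, (∀ k, u k ∈ V) → D ∣ DWpoly h u) → D ∣ Ui)
    (z : ℂ) :
    ∃ u : Fin i → Polynomial ℂ, (∀ k, u k ∈ V) ∧
      ¬ (X - C z) ^ (Ui.rootMultiplicity z + 1) ∣ DWpoly h u := by
  by_contra hc
  push_neg at hc
  set c := Ui.rootMultiplicity z with hcdef
  have hUine : Ui ≠ 0 := hmonic.ne_zero
  obtain ⟨Q, hQ⟩ := Polynomial.pow_rootMultiplicity_dvd Ui z
  have hQnr : ¬ (X - C z) ∣ Q := by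
    intro hd
    obtain ⟨R, rfl⟩ := hd
    have : (X - C z) ^ (c + 1) ∣ Ui := ⟨R, by rw [hQ]; ring⟩
    have := (Polynomial.le_rootMultiplicity_iff hUine).mpr this
    omega
  have hall : ∀ u : Fin i → Polynomial ℂ, (∀ k, u k ∈ V) → Ui * (X - C z) ∣ DWpoly h u := by
    intro u huV
    obtain ⟨A, hA⟩ := hdvd u huV
    have h1 : (X - C z) ^ (c + 1) ∣ DWpoly h u := hc u huV
    rw [hA, hQ] at h1
    have h2 : (X - C z) ^ c * (X - C z) ∣ (X - C z) ^ c * (Q * A) := by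
      rw [← pow_succ]
      exact h1.trans (dvd_of_eq (by ring))
    have h3 : (X - C z) ∣ Q * A :=
      (mul_dvd_mul_iff_left (pow_ne_zero c (Polynomial.X_sub_C_ne_zero z))).mp h2
    have h4 : (X - C z) ∣ A := ((Polynomial.prime_X_sub_C z).dvd_mul.mp h3).resolve_left hQnr
    obtain ⟨A', rfl⟩ := h4
    exact ⟨A', by rw [hA]; ring⟩
  have hdvdUi : Ui * (X - C z) ∣ Ui := hgcd _ hall
  have := Polynomial.natDegree_le_of_dvd hdvdUi hUine
  rw [Polynomial.natDegree_mul hUine (Polynomial.X_sub_C_ne_zero z),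
    Polynomial.natDegree_X_sub_C] at this
  omega

lemma univ_dvd (h : ℂ) (V : Submodule ℂ (Polynomial ℂ)) (i : ℕ) (Ui : Polynomial ℂ)
    (hdvd : ∀ u : Fin i → Polynomial ℂ, (∀ k, u k ∈ V) → Ui ∣ DWpoly h u)
    (z : ℂ) (u : Fin i → Polynomial ℂ) (huV : ∀ k, u k ∈ V) :
    (X - C z) ^ (Ui.rootMultiplicity z) ∣ DWpoly h u :=
  (Polynomial.pow_rootMultiplicity_dvd Ui z).trans (hdvd u huV)

lemma phiC_C_mul (z : ℂ) (a : ℕ) (c : ℂ) (P : Polynomial ℂ) :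
    phiC z a (Polynomial.C c * P) = c * phiC z a P := by
  unfold phiC
  rw [mul_comp, C_comp, coeff_C_mul]

lemma comp_shift_ne_zero {P : Polynomial ℂ} (hP : P ≠ 0) (a : ℂ) :
    P.comp (X + C a) ≠ 0 := by
  intro hc
  have := congrArg (fun Q => Q.comp (X - C a)) hc
  simp only [comp_shift_cancel, zero_comp] at this
  exact hP this

lemma key_ineq (h : ℂ) (V : Submodule ℂ (Polynomial ℂ)) (N : ℕ) (U : ℕ → Polynomial ℂ)
    (hU : ∀ i, 1 ≤ i → i ≤ N + 1 → (U i).Monic ∧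
      (∀ u : Fin i → Polynomial ℂ, (∀ k, u k ∈ V) → U i ∣ DWpoly h u) ∧
      (∀ D : Polynomial ℂ,
        (∀ u : Fin i → Polynomial ℂ, (∀ k, u k ∈ V) → D ∣ DWpoly h u) → D ∣ U i))
    (n : ℕ) (hn : n + 2 ≤ N) (z : ℂ) :
    (U (n+2)).rootMultiplicity z + (U (n+2)).rootMultiplicity (z+h)
      ≤ (U (n+3)).rootMultiplicity z + (U (n+1)).rootMultiplicity (z+h) := by
  obtain ⟨hU3m, hU3d, hU3g⟩ := hU (n+3) (by omega) (by omega)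
  obtain ⟨hU1m, hU1d, hU1g⟩ := hU (n+1) (by omega) (by omega)
  obtain ⟨hU2m, hU2d, hU2g⟩ := hU (n+2) (by omega) (by omega)
  set a1 := (U (n+3)).rootMultiplicity z with ha1
  set b1 := (U (n+1)).rootMultiplicity (z+h) with hb1
  obtain ⟨u0, hu0V, hu0⟩ := exact_tuple h V (n+3) (U (n+3)) hU3m hU3d hU3g z
  obtain ⟨wm, hwmV, hwm⟩ := exact_tuple h V (n+1) (U (n+1)) hU1m hU1d hU1g (z+h)
  have hphi0 : phiC z a1 (DWpoly h u0) ≠ 0 := fun hc =>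
    hu0 ((phiC_char (univ_dvd h V _ _ hU3d z u0 hu0V)).mpr hc)
  have hphiw : phiC (z+h) b1 (DWpoly h wm) ≠ 0 := fun hc =>
    hwm ((phiC_char (univ_dvd h V _ _ hU1d (z+h) wm hwmV)).mpr hc)
  set w : Fin (n+3) → Polynomial ℂ := fun k =>
    Fin.lastCases 0 (fun y => Fin.cases 0 (fun k' => wm k') y) k with hwdef
  have hwmid : ∀ k' : Fin (n+1), w (k'.succ.castSucc) = wm k' := by
    intro k'
    simp only [hwdef]
    rw [show (k'.succ.castSucc : Fin (n+3)) = Fin.castSucc k'.succ from rfl,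
      Fin.lastCases_castSucc, Fin.cases_succ]
  have hwV : ∀ k, w k ∈ V := by
    intro k
    induction k using Fin.lastCases with
    | last => simp only [hwdef, Fin.lastCases_last]; exact V.zero_mem
    | cast y =>
      induction y using Fin.cases with
      | zero =>
        simp only [hwdef, Fin.lastCases_castSucc, Fin.cases_zero]
        exact V.zero_mem
      | succ k' =>
        simp only [hwdef, Fin.lastCases_castSucc, Fin.cases_succ]
        exact hwmV k'
  set umid : Fin (n+1) → Polynomial ℂ := fun k' => u0 (k'.succ.castSucc) with humid
  obtain ⟨F, hF⟩ := pencil_exists h z a1 u0 w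
  have hFne : F ≠ 0 := by
    intro hc
    have h0 := hF 0
    rw [hc, Polynomial.eval_zero] at h0
    rw [show (fun k => u0 k + Polynomial.C (0:ℂ) * w k) = u0 from by funext k; simp] at h0
    exact hphi0 h0.symm
  obtain ⟨G, hG⟩ := pencil_exists h (z+h) b1 wm umid
  have hGne : G ≠ 0 := by
    intro hc
    have h0 := hG 0
    rw [hc, Polynomial.eval_zero] at h0
    rw [show (fun k => wm k + Polynomial.C (0:ℂ) * umid k) = wm from by funext k; simp] at h0
    exact hphiw h0.symm
  obtain ⟨τ, hτ⟩ := Infinite.exists_notMem_finset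
    (F.roots.toFinset ∪ {(0:ℂ)} ∪ G.roots.toFinset.image (fun σ => σ⁻¹))
  simp only [Finset.mem_union, Finset.mem_image, Multiset.mem_toFinset,
    Finset.mem_singleton, not_or, not_exists] at hτ
  obtain ⟨⟨hτF, hτ0⟩, hτG⟩ := hτ
  have hFτ : F.eval τ ≠ 0 := by
    intro hc
    exact hτF ((Polynomial.mem_roots hFne).mpr hc)
  have hGτ : G.eval τ⁻¹ ≠ 0 := by
    intro hc
    exact (hτG τ⁻¹) ⟨(Polynomial.mem_roots hGne).mpr hc, inv_inv τ⟩
  set v : Fin (n+3) → Polynomial ℂ := fun k => u0 k + Polynomial.C τ * w k with hvdef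
  have hvV : ∀ k, v k ∈ V := fun k => V.add_mem (hu0V k)
    (by rw [← Polynomial.smul_eq_C_mul]; exact V.smul_mem τ (hwV k))
  have hphiv : phiC z a1 (DWpoly h v) ≠ 0 := by rw [hvdef, ← hF τ]; exact hFτ
  have hdv : (X - C z) ^ a1 ∣ DWpoly h v := univ_dvd h V _ _ hU3d z v hvV
  obtain ⟨hvne, hrm⟩ := rm_eq_of hdv (fun hc => hphiv ((phiC_char hdv).mp hc))
  set vmid : Fin (n+1) → Polynomial ℂ := fun k' => v (k'.succ.castSucc) with hvmiddef
  have hvmidV : ∀ k', vmid k' ∈ V := fun k' => hvV _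
  have hvmid_eq : vmid = fun k' => Polynomial.C τ * (wm k' + Polynomial.C τ⁻¹ * umid k') := by
    funext k'
    simp only [hvmiddef, hvdef, humid]
    rw [hwmid k', mul_add, ← mul_assoc, ← Polynomial.C_mul, mul_inv_cancel₀ hτ0, Polynomial.C_1, one_mul]
    ring
  have hphivmid : phiC (z+h) b1 (DWpoly h vmid) ≠ 0 := by
    rw [hvmid_eq, DW_smul, ← map_pow, phiC_C_mul, ← hG τ⁻¹]
    exact mul_ne_zero (pow_ne_zero _ hτ0) hGτ
  have hdvmid : (X - C (z+h)) ^ b1 ∣ DWpoly h vmid := univ_dvd h V _ _ hU1d (z+h) vmid hvmidV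
  obtain ⟨hvmne, hrmmid⟩ := rm_eq_of hdvmid (fun hc => hphivmid ((phiC_char hdvmid).mp hc))
  -- the Wronskian matrix and its minors
  set M : Matrix (Fin (n+3)) (Fin (n+3)) (Polynomial ℂ) :=
    Matrix.of fun k j => (v k).comp (X + C ((j : ℕ) * h)) with hM
  have hdetM : M.det = DWpoly h v := rfl
  have hInner : (M.submatrix (fun k : Fin (n+1) => k.succ.castSucc)
      (fun k : Fin (n+1) => k.succ.castSucc)).det = (DWpoly h vmid).comp (X + C h) := by
    rw [← DW_comp_shift h h vmid]
    refine congrArg Matrix.det (Matrix.ext fun k j => ?_)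
    simp only [Matrix.submatrix_apply, Matrix.of_apply, hM, hvmiddef]
    rw [show ((j.succ.castSucc : Fin (n+3)) : ℕ) = (j : ℕ) + 1 from by simp,
      show ((((j : ℕ) + 1 : ℕ) : ℂ)) * h = (j : ℕ) * h + h from by push_cast; ring]
  have hd00 : (M.submatrix ((0 : Fin (n+3)).succAbove) ((0 : Fin (n+3)).succAbove)).det
      = (DWpoly h (fun k : Fin (n+2) => v k.succ)).comp (X + C h) := by
    rw [← DW_comp_shift h h _]
    refine congrArg Matrix.det (Matrix.ext fun k j => ?_)
    simp only [Matrix.submatrix_apply, Matrix.of_apply, hM, Fin.zero_succAbove]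
    rw [show ((j.succ : Fin (n+3)) : ℕ) = (j : ℕ) + 1 from by simp,
      show ((((j : ℕ) + 1 : ℕ) : ℂ)) * h = (j : ℕ) * h + h from by push_cast; ring]
  have hdLL : (M.submatrix ((Fin.last (n+2)).succAbove) ((Fin.last (n+2)).succAbove)).det
      = DWpoly h (fun k : Fin (n+2) => v k.castSucc) := by
    refine congrArg Matrix.det (Matrix.ext fun k j => ?_)
    simp only [Matrix.submatrix_apply, Matrix.of_apply, hM, Fin.succAbove_last, DWpoly,
      Fin.coe_castSucc]
  have hd0L : (M.submatrix ((0 : Fin (n+3)).succAbove) ((Fin.last (n+2)).succAbove)).det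
      = DWpoly h (fun k : Fin (n+2) => v k.succ) := by
    refine congrArg Matrix.det (Matrix.ext fun k j => ?_)
    simp only [Matrix.submatrix_apply, Matrix.of_apply, hM, Fin.succAbove_last,
      Fin.zero_succAbove, DWpoly, Fin.coe_castSucc]
  have hdL0 : (M.submatrix ((Fin.last (n+2)).succAbove) ((0 : Fin (n+3)).succAbove)).det
      = (DWpoly h (fun k : Fin (n+2) => v k.castSucc)).comp (X + C h) := by
    rw [← DW_comp_shift h h _]
    refine congrArg Matrix.det (Matrix.ext fun k j => ?_)
    simp only [Matrix.submatrix_apply, Matrix.of_apply, hM, Fin.succAbove_last,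
      Fin.zero_succAbove, Fin.coe_castSucc]
    rw [show ((j.succ : Fin (n+3)) : ℕ) = (j : ℕ) + 1 from by simp,
      show ((((j : ℕ) + 1 : ℕ) : ℂ)) * h = (j : ℕ) * h + h from by push_cast; ring]
  -- transfer Dodgson over the fraction field
  set ι := algebraMap (Polynomial ℂ) (RatFunc ℂ) with hι
  have hinj : Function.Injective ι := IsFractionRing.injective _ _
  have hcompne : (DWpoly h vmid).comp (X + C h) ≠ 0 := comp_shift_ne_zero hvmne h
  have hmapdet : ∀ (f g : Fin (n+2) → Fin (n+3)),
      ((M.map ι).submatrix f g).det = ι ((M.submatrix f g).det) := by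
    intro f g
    rw [Matrix.submatrix_map]
    exact (RingHom.map_det ι (M.submatrix f g)).symm
  have hmapdet' : ∀ (f g : Fin (n+1) → Fin (n+3)),
      ((M.map ι).submatrix f g).det = ι ((M.submatrix f g).det) := by
    intro f g
    rw [Matrix.submatrix_map]
    exact (RingHom.map_det ι (M.submatrix f g)).symm
  have hE : (((M.map ι)).submatrix (fun k : Fin (n+1) => k.succ.castSucc)
      (fun k : Fin (n+1) => k.succ.castSucc)).det ≠ 0 := by
    rw [hmapdet', hInner]
    intro hc0
    exact hcompne (hinj (hc0.trans (map_zero ι).symm))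
  have hdodg := dodgson (M.map ι) hE
  have hMd : ι M.det = (M.map ι).det := RingHom.map_det ι M
  rw [← hMd] at hdodg
  rw [hmapdet', hmapdet, hmapdet, hmapdet, hmapdet] at hdodg
  rw [← RingHom.map_mul ι, ← RingHom.map_mul ι, ← RingHom.map_mul ι, ← RingHom.map_sub ι] at hdodg
  have hident := hinj hdodg
  rw [hdetM, hInner, hd00, hdLL, hd0L, hdL0] at hident
  -- divisibility of the right-hand side
  set α := (U (n+2)).rootMultiplicity z with hα
  set β := (U (n+2)).rootMultiplicity (z+h) with hβ
  have hterm : (X - C z) ^ (β + α) ∣ DWpoly h v * (DWpoly h vmid).comp (X + C h) := by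
    rw [hident]
    apply dvd_sub
    · rw [pow_add]
      exact mul_dvd_mul
        (pow_dvd_comp_iff.mpr (univ_dvd h V _ _ hU2d (z+h) _ (fun k => hvV _)))
        (univ_dvd h V _ _ hU2d z _ (fun k => hvV _))
    · rw [add_comm β α, pow_add]
      exact mul_dvd_mul
        (univ_dvd h V _ _ hU2d z _ (fun k => hvV _))
        (pow_dvd_comp_iff.mpr (univ_dvd h V _ _ hU2d (z+h) _ (fun k => hvV _)))
  have hne2 : DWpoly h v * (DWpoly h vmid).comp (X + C h) ≠ 0 := mul_ne_zero hvne hcompne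
  have hle := (Polynomial.le_rootMultiplicity_iff hne2).mpr hterm
  rw [Polynomial.rootMultiplicity_mul hne2, hrm,
    rm_comp_shift (DWpoly h vmid) z h hvmne, hrmmid] at hle
  omega

lemma monic_ext_of_rootMultiplicity {P Q : Polynomial ℂ} (hP : P.Monic) (hQ : Q.Monic)
    (hrm : ∀ z, P.rootMultiplicity z = Q.rootMultiplicity z) : P = Q := by
  classical
  have hroots : P.roots = Q.roots := Multiset.ext.mpr fun z => by
    rw [Polynomial.count_roots, Polynomial.count_roots, hrm]
  rw [(IsAlgClosed.splits P).eq_prod_roots_of_monic hP,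
    (IsAlgClosed.splits Q).eq_prod_roots_of_monic hQ, hroots]

lemma rm_finset_prod {ι : Type} (s : Finset ι) (f : ι → Polynomial ℂ)
    (hf : ∀ i ∈ s, f i ≠ 0) (z : ℂ) :
    (∏ i ∈ s, f i).rootMultiplicity z = ∑ i ∈ s, (f i).rootMultiplicity z := by
  classical
  induction s using Finset.induction with
  | empty =>
    simp only [Finset.prod_empty, Finset.sum_empty]
    exact Polynomial.rootMultiplicity_eq_zero (by simp [Polynomial.IsRoot])
  | insert a t hx ih =>
    rw [Finset.prod_insert hx, Finset.sum_insert hx,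
      Polynomial.rootMultiplicity_mul
        (mul_ne_zero (hf a (Finset.mem_insert_self a t))
          (Finset.prod_ne_zero_iff.mpr fun i hi => hf i (Finset.mem_insert_of_mem hi))),
      ih (fun i hi => hf i (Finset.mem_insert_of_mem hi))]

lemma rm_pow_X_sub_C_ne {w z : ℂ} (k : ℕ) (hzw : z ≠ w) :
    ((X - C w) ^ k).rootMultiplicity z = 0 :=
  Polynomial.rootMultiplicity_eq_zero
    (fun hr => (pow_ne_zero k (sub_ne_zero.mpr hzw)) (by simpa using hr))


/-- for an `(N+1)`-dimensional space `V` of polynomials without base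
points, with `U_i` the monic gcd of the order-`i` discrete Wronskians of elements of
`V`, there is a unique sequence of monic polynomials `T_1, ..., T_N` with
`U_i = ∏_{s=1}^{i-1} ∏_{j=1}^{i-s} T_s(x+(j-1)h)` for `i = 1, ..., N+1`. -/
theorem stmt13 (h : ℂ) (hh : h ≠ 0) (N : ℕ) (V : Submodule ℂ (Polynomial ℂ))
    (hdim : Module.finrank ℂ V = N + 1)
    (hbp : ∀ z : ℂ, ∃ v ∈ V, Polynomial.eval z v ≠ 0)
    (U : ℕ → Polynomial ℂ)
    (hU : ∀ i, 1 ≤ i → i ≤ N + 1 → (U i).Monic ∧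
      (∀ u : Fin i → Polynomial ℂ, (∀ k, u k ∈ V) → U i ∣ DWpoly h u) ∧
      (∀ D : Polynomial ℂ,
        (∀ u : Fin i → Polynomial ℂ, (∀ k, u k ∈ V) → D ∣ DWpoly h u) → D ∣ U i)) :
    ∃! T : Fin N → Polynomial ℂ, (∀ s, (T s).Monic) ∧
      ∀ i, 1 ≤ i → i ≤ N + 1 →
        U i = ∏ s : Fin N, ∏ j ∈ Finset.range (i - 1 - s.1),
          (T s).comp (Polynomial.X + Polynomial.C (j * h)) := by
  classical
  have hU1 : U 1 = 1 :=
    U1_eq_one h V hbp (U 1) (hU 1 le_rfl (by omega)).1 (hU 1 le_rfl (by omega)).2.1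
  set c : ℕ → ℂ → ℕ := fun i z => if i = 0 then 0 else (U i).rootMultiplicity z with hcdef
  have hc0 : ∀ z, c 0 z = 0 := fun z => by simp [hcdef]
  have hc1 : ∀ z, c 1 z = 0 := fun z => by
    simp only [hcdef, if_neg one_ne_zero, hU1]
    exact Polynomial.rootMultiplicity_eq_zero (by simp [Polynomial.IsRoot])
  set mZ : ℕ → ℂ → ℤ :=
    fun s z => (c (s+2) z : ℤ) - c (s+1) z - c (s+1) (z+h) + c s (z+h) with hmZdef
  have hmZ_nonneg : ∀ s, s < N → ∀ z, 0 ≤ mZ s z := by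
    intro s hs z
    rcases Nat.eq_zero_or_pos s with rfl | hpos
    · simp [hmZdef, hc1, hc0]
    · obtain ⟨n, rfl⟩ : ∃ n, s = n + 1 := ⟨s - 1, by omega⟩
      have hki := key_ineq h V N U hU n (by omega) z
      simp only [hmZdef, hcdef, if_neg (Nat.succ_ne_zero _)]
      rw [show n+1+2 = n+3 from by omega, show n+1+1 = n+2 from by omega]
      omega
  set R0 : Finset ℂ := (Finset.range (N+2)).biUnion (fun i => (U i).roots.toFinset) with hR0
  set S : Finset ℂ := R0 ∪ R0.image (fun w => w - h) with hS
  have hcS : ∀ i, i ≤ N + 1 → ∀ z, z ∉ R0 → c i z = 0 := by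
    intro i hi z hz
    rcases Nat.eq_zero_or_pos i with rfl | hpos
    · exact hc0 z
    · simp only [hcdef, if_neg (by omega : ¬ i = 0)]
      by_contra hne
      have hroot : (U i).IsRoot z := by
        by_contra hnr
        exact hne (Polynomial.rootMultiplicity_eq_zero hnr)
      refine hz ?_
      rw [hR0]
      exact Finset.mem_biUnion.mpr ⟨i, Finset.mem_range.mpr (by omega),
        Multiset.mem_toFinset.mpr
          ((Polynomial.mem_roots (hU i hpos hi).1.ne_zero).mpr hroot)⟩
  have hmZS : ∀ s, s < N → ∀ z, z ∉ S → mZ s z = 0 := by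
    intro s hs z hz
    have hz1 : z ∉ R0 := fun hin => hz (by rw [hS]; exact Finset.mem_union_left _ hin)
    have hz2 : (z + h) ∉ R0 := fun hin => hz (by
      rw [hS]
      exact Finset.mem_union_right _ (Finset.mem_image.mpr ⟨z + h, hin, by ring⟩))
    simp [hmZdef, hcS (s+2) (by omega) z hz1, hcS (s+1) (by omega) z hz1,
      hcS (s+1) (by omega) (z+h) hz2, hcS s (by omega) (z+h) hz2]
  set e : ℕ → ℂ → ℕ := fun s w => (mZ s w).toNat with hedef
  set T : Fin N → Polynomial ℂ := fun s => ∏ w ∈ S, (X - C w) ^ (e s.1 w) with hTdef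
  have hTmonic : ∀ s, (T s).Monic := fun s =>
    Polynomial.monic_prod_of_monic _ _ (fun w _ => (Polynomial.monic_X_sub_C w).pow _)
  have hTrm : ∀ (s : Fin N) (z : ℂ), (T s).rootMultiplicity z = e s.1 z := by
    intro s z
    rw [hTdef]
    simp only
    rw [rm_finset_prod S _ (fun w _ => pow_ne_zero _ (Polynomial.X_sub_C_ne_zero w)) z]
    by_cases hz : z ∈ S
    · rw [Finset.sum_eq_single_of_mem z hz
        (fun w _ hwz => rm_pow_X_sub_C_ne _ (fun hc => hwz (hc.symm)))]
      exact Polynomial.rootMultiplicity_X_sub_C_pow z _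
    · rw [Finset.sum_eq_zero (fun w hw => rm_pow_X_sub_C_ne _
        (fun hc => hz (by rwa [← hc] at hw)))]
      rw [hedef]
      simp [hmZS s.1 s.isLt z hz]
  have htel : ∀ i, 1 ≤ i → i ≤ N + 1 → ∀ z, (c i z : ℤ)
      = ∑ s ∈ Finset.range N, ∑ j ∈ Finset.range (i - 1 - s), mZ s (z + (j : ℂ) * h) := by
    intro i
    induction i with
    | zero => exact fun h1 => absurd h1 (by omega)
    | succ i ih =>
      intro h1 h2 z
      rcases Nat.eq_zero_or_pos i with rfl | hipos
      · have hz0 : ∀ s : ℕ, 0 + 1 - 1 - s = 0 := fun s => by omega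
        simp [hz0, hc1 z]
      · have hiN : i ≤ N := by omega
        have hrec := ih (by omega) (by omega) z
        have hdiff : (c (i+1) z : ℤ) - c i z
            = ∑ s ∈ Finset.range i, mZ s (z + ((i - 1 - s : ℕ) : ℂ) * h) := by
          have hterm : ∀ s ∈ Finset.range i, mZ s (z + ((i - 1 - s : ℕ) : ℂ) * h)
              = (fun t => (c (t+1) (z + ((i - t : ℕ) : ℂ) * h) : ℤ)
                  - c t (z + ((i - t : ℕ) : ℂ) * h)) (s+1)
                - (fun t => (c (t+1) (z + ((i - t : ℕ) : ℂ) * h) : ℤ)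
                  - c t (z + ((i - t : ℕ) : ℂ) * h)) s := by
            intro s hs
            simp only
            have hs' : s < i := Finset.mem_range.mp hs
            have h2' : i - (s+1) = i - 1 - s := by omega
            have hcast : (((i - s : ℕ)) : ℂ) * h = ((i - 1 - s : ℕ) : ℂ) * h + h := by
              rw [show i - s = (i - 1 - s) + 1 from by omega]
              push_cast
              ring
            rw [h2', hcast]
            simp only [hmZdef]
            ring
          have hsum := Finset.sum_range_sub (fun t => (c (t+1) (z + ((i - t : ℕ) : ℂ) * h) : ℤ)
            - c t (z + ((i - t : ℕ) : ℂ) * h)) i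
          rw [Finset.sum_congr rfl hterm, hsum]
          simp only [Nat.sub_self, Nat.cast_zero, zero_mul, add_zero, Nat.sub_zero]
          rw [hc1, hc0]
          push_cast
          ring
        have hsplit : ∀ s ∈ Finset.range N,
            ∑ j ∈ Finset.range ((i+1) - 1 - s), mZ s (z + (j:ℂ)*h)
            = (∑ j ∈ Finset.range (i - 1 - s), mZ s (z + (j:ℂ)*h))
              + (if s < i then mZ s (z + ((i - 1 - s : ℕ):ℂ) * h) else 0) := by
          intro s _
          by_cases hsi : s < i
          · rw [if_pos hsi, show (i+1) - 1 - s = (i - 1 - s) + 1 from by omega,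
              Finset.sum_range_succ]
          · rw [if_neg hsi, show (i+1) - 1 - s = i - 1 - s from by omega, add_zero]
        have hbig : ∑ s ∈ Finset.range N, ∑ j ∈ Finset.range ((i+1) - 1 - s),
              mZ s (z + (j:ℂ)*h)
            = (∑ s ∈ Finset.range N, ∑ j ∈ Finset.range (i - 1 - s), mZ s (z + (j:ℂ)*h))
              + ∑ s ∈ Finset.range i, mZ s (z + ((i - 1 - s : ℕ):ℂ)*h) := by
          rw [Finset.sum_congr rfl hsplit, Finset.sum_add_distrib]
          congr 1
          rw [← Finset.sum_subset (Finset.range_subset_range.mpr hiN)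
            (fun x _ hnx => if_neg (fun hc => hnx (Finset.mem_range.mpr hc)))]
          exact Finset.sum_congr rfl (fun x hx => if_pos (Finset.mem_range.mp hx))
        rw [hbig, ← hrec, ← hdiff]
        ring
  have hfinal : ∀ i, 1 ≤ i → i ≤ N + 1 →
      U i = ∏ s : Fin N, ∏ j ∈ Finset.range (i - 1 - s.1),
        (T s).comp (Polynomial.X + Polynomial.C (j * h)) := by
    intro i h1 h2
    refine monic_ext_of_rootMultiplicity (hU i h1 h2).1
      (Polynomial.monic_prod_of_monic _ _ (fun s _ =>
        Polynomial.monic_prod_of_monic _ _ (fun j _ => (hTmonic s).comp_X_add_C _))) ?_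
    intro z
    rw [rm_finset_prod _ _ (fun s _ => (Polynomial.monic_prod_of_monic _ _ fun j _ =>
      (hTmonic s).comp_X_add_C _).ne_zero) z]
    have hz1 : ∀ s : Fin N, (∏ j ∈ Finset.range (i - 1 - s.1),
        (T s).comp (Polynomial.X + Polynomial.C (j * h))).rootMultiplicity z
        = ∑ j ∈ Finset.range (i - 1 - s.1), e s.1 (z + (j:ℂ)*h) := by
      intro s
      rw [rm_finset_prod _ _ (fun j _ => ((hTmonic s).comp_X_add_C _).ne_zero) z]
      exact Finset.sum_congr rfl fun j _ => by
        rw [rm_comp_shift (T s) z ((j:ℂ)*h) (hTmonic s).ne_zero, hTrm]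
    rw [Finset.sum_congr rfl (fun s _ => hz1 s)]
    have hiz : c i z = (U i).rootMultiplicity z := by
      rw [hcdef]
      exact if_neg (by omega)
    have hcast := htel i h1 h2 z
    have e1 : ∀ s ∈ Finset.range N, (∑ j ∈ Finset.range (i - 1 - s), mZ s (z + (j:ℂ)*h))
        = ((∑ j ∈ Finset.range (i - 1 - s), e s (z + (j:ℂ)*h) : ℕ) : ℤ) := by
      intro s hs
      push_cast
      refine Finset.sum_congr rfl fun j _ => ?_
      rw [hedef]
      exact (Int.toNat_of_nonneg (hmZ_nonneg s (Finset.mem_range.mp hs) _)).symm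
    have e2 : (c i z : ℤ) = ((∑ s ∈ Finset.range N,
        ∑ j ∈ Finset.range (i - 1 - s), e s (z + (j:ℂ)*h) : ℕ) : ℤ) := by
      rw [hcast, Finset.sum_congr rfl e1]
      push_cast
      rfl
    have e3 : c i z = ∑ s ∈ Finset.range N,
        ∑ j ∈ Finset.range (i - 1 - s), e s (z + (j:ℂ)*h) := by exact_mod_cast e2
    rw [← hiz, e3]
    exact (Fin.sum_univ_eq_sum_range
      (fun s => ∑ j ∈ Finset.range (i - 1 - s), e s (z + (j:ℂ)*h)) N).symm
  refine ⟨T, ⟨hTmonic, hfinal⟩, ?_⟩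
  rintro T' ⟨hT'm, hT'f⟩
  funext s
  suffices H : ∀ n, ∀ s : Fin N, s.1 = n → T' s = T s by exact H s.1 s rfl
  intro n
  induction n using Nat.strong_induction_on with
  | _ n IH =>
    intro s hs
    have hsN : s.1 < N := s.isLt
    have hi1 : 1 ≤ s.1 + 2 := by omega
    have hi2 : s.1 + 2 ≤ N + 1 := by omega
    have hf1 := hT'f (s.1+2) hi1 hi2
    have hf2 := hfinal (s.1+2) hi1 hi2
    set F' : Fin N → Polynomial ℂ := fun s' => ∏ j ∈ Finset.range ((s.1+2) - 1 - s'.1),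
      (T' s').comp (Polynomial.X + Polynomial.C (j * h)) with hF'
    set Fq : Fin N → Polynomial ℂ := fun s' => ∏ j ∈ Finset.range ((s.1+2) - 1 - s'.1),
      (T s').comp (Polynomial.X + Polynomial.C (j * h)) with hFq
    have hkey : ∀ s' : Fin N, s' ≠ s → F' s' = Fq s' := by
      intro s' hne
      rcases Nat.lt_trichotomy s'.1 s.1 with hlt | heq | hgt
      · rw [hF', hFq]
        simp only
        rw [IH s'.1 (by omega) s' rfl]
      · exact absurd (Fin.ext heq) hne
      · rw [hF', hFq]
        simp only
        rw [show (s.1+2) - 1 - s'.1 = 0 from by omega]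
        simp
    have hsplit : U (s.1+2) = F' s * ∏ s' ∈ Finset.univ.erase s, F' s' := by
      rw [hf1, ← Finset.mul_prod_erase Finset.univ F' (Finset.mem_univ s)]
    have hsplit2 : U (s.1+2) = Fq s * ∏ s' ∈ Finset.univ.erase s, F' s' := by
      rw [hf2, ← Finset.mul_prod_erase Finset.univ Fq (Finset.mem_univ s)]
      congr 1
      exact Finset.prod_congr rfl (fun s' hs' => (hkey s' (Finset.ne_of_mem_erase hs')).symm)
    have hPne : (∏ s' ∈ Finset.univ.erase s, F' s') ≠ 0 := by
      refine Finset.prod_ne_zero_iff.mpr (fun s' _ => ?_)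
      exact (Polynomial.monic_prod_of_monic _ _ fun j _ => (hT'm s').comp_X_add_C _).ne_zero
    have hFF : F' s = Fq s := mul_right_cancel₀ hPne (hsplit.symm.trans hsplit2)
    rw [hF', hFq] at hFF
    simp only at hFF
    rw [show (s.1+2) - 1 - s.1 = 1 from by omega] at hFF
    simpa using hFF
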